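/- Let n ≥ 1, let M be an n×n matrix over RatFunc ℂ, and let B and I be nonempty complementary subsets of the index set Fin n such that the matrix M_II - X • 1 is invertible over RatFunc ℂ. Then det(R(M;B) - X • 1) = det(M - X • 1) / det(M_II - X • 1), where R(M;B) = M_BB - M_BI * (M_II - X • 1)⁻¹ * M_IB is the isospectral reduction of M over B. -/

import Mathlib

set_option synthInstance.maxHeartbeats 1000000
set_option maxHeartbeats 1000000

open Matrix

/-- The isospectral reduction of `M` over `B` (with interior index set `I`):
`R(M;B) = M_BB - M_BI (M_II - X•1)⁻¹ M_IB`. -/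
noncomputable def isoRed {n : ℕ} (M : Matrix (Fin n) (Fin n) (RatFunc ℂ))
    (B I : Finset (Fin n)) : Matrix ↥B ↥B (RatFunc ℂ) :=
  M.submatrix (Subtype.val : ↥B → Fin n) (Subtype.val : ↥B → Fin n) -
    M.submatrix (Subtype.val : ↥B → Fin n) (Subtype.val : ↥I → Fin n) *
      (M.submatrix (Subtype.val : ↥I → Fin n) (Subtype.val : ↥I → Fin n) -
        (RatFunc.X : RatFunc ℂ) • 1)⁻¹ *
      M.submatrix (Subtype.val : ↥I → Fin n) (Subtype.val : ↥B → Fin n)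

theorem det_isoRed_eq_det_div_det {n : ℕ} (hn : 1 ≤ n)
    (M : Matrix (Fin n) (Fin n) (RatFunc ℂ)) (B I : Finset (Fin n))
    (hB : B.Nonempty) (hI : I.Nonempty) (hcompl : I = Bᶜ)
    (hinv : IsUnit (M.submatrix (Subtype.val : ↥I → Fin n) (Subtype.val : ↥I → Fin n) -
      (RatFunc.X : RatFunc ℂ) • 1)) :
    (isoRed M B I - (RatFunc.X : RatFunc ℂ) • 1).det =
      (M - (RatFunc.X : RatFunc ℂ) • 1).det /
        (M.submatrix (Subtype.val : ↥I → Fin n) (Subtype.val : ↥I → Fin n) -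
          (RatFunc.X : RatFunc ℂ) • 1).det := by
  subst hcompl
  set x : RatFunc ℂ := RatFunc.X
  set N := M - x • (1 : Matrix (Fin n) (Fin n) (RatFunc ℂ)) with hN
  set D := M.submatrix (Subtype.val : ↥(Bᶜ) → Fin n) (Subtype.val : ↥(Bᶜ) → Fin n) -
      x • (1 : Matrix ↥(Bᶜ) ↥(Bᶜ) (RatFunc ℂ)) with hD
  haveI : Invertible D := hinv.invertible
  -- the equivalence Fin n ≃ ↥B ⊕ ↥Bᶜ
  let eI : ↥(Bᶜ) ≃ {a : Fin n // ¬ a ∈ B} :=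
    Equiv.subtypeEquivRight (fun a => Finset.mem_compl)
  let e : ↥B ⊕ ↥(Bᶜ) ≃ Fin n :=
    (Equiv.sumCongr (Equiv.refl ↥B) eI).trans (Equiv.sumCompl (· ∈ B))
  have hblock : N.submatrix e e = Matrix.fromBlocks
      (M.submatrix (Subtype.val : ↥B → Fin n) (Subtype.val : ↥B → Fin n) - x • 1)
      (M.submatrix (Subtype.val : ↥B → Fin n) (Subtype.val : ↥(Bᶜ) → Fin n))
      (M.submatrix (Subtype.val : ↥(Bᶜ) → Fin n) (Subtype.val : ↥B → Fin n))
      D := by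
    ext i j
    have key : ∀ (b : ↥B) (c : ↥(Bᶜ)), (b : Fin n) ≠ (c : Fin n) := by
      intro b c h
      have := c.2
      rw [Finset.mem_compl, ← h] at this
      exact this b.2
    cases i with
    | inl i => cases j with
      | inl j =>
        simp [e, eI, hN, Matrix.one_apply]
      | inr j =>
        simp [e, eI, hN, Matrix.one_apply, key i j]
    | inr i => cases j with
      | inl j =>
        simp [e, eI, hN, Matrix.one_apply, (key j i).symm]
      | inr j =>
        simp [e, eI, hN, hD, Matrix.one_apply]
  have hdet : N.det = D.det * (isoRed M B Bᶜ - x • 1).det := by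
    rw [← Matrix.det_submatrix_equiv_self e N, hblock, Matrix.det_fromBlocks₂₂]
    congr 2
    rw [Matrix.invOf_eq_nonsing_inv]
    unfold isoRed
    abel
  have hD0 : D.det ≠ 0 := by
    have := (Matrix.isUnit_iff_isUnit_det D).mp hinv
    exact this.ne_zero
  rw [hdet]
  field_simp
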